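/- Let V, W be finite-dimensional complex vector spaces, let u : V → W and w : W → V be linear maps such that w ∘ u + Id_V is invertible, and let s : V → V be the unique linear map with spectrum contained in Σ₁ such that exp(2πi·s) = w ∘ u + Id_V. Then ψ(s) is invertible, and the map x := ψ(s)^{−1} ∘ w satisfies x ∘ u = s; in particular the spectrum of x ∘ u is contained in Σ₁. -/

import Mathlib

open Complex

noncomputable section

/-- The set Σ: complex numbers `α` with `-1 ≤ Re α ≤ 0`, `Im α ≥ 0` if `Re α = -1`,
and `Im α < 0` if `Re α = 0`. -/
def SigmaSet : Set ℂ :=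
  {α : ℂ | -1 ≤ α.re ∧ α.re ≤ 0 ∧ (α.re = -1 → 0 ≤ α.im) ∧ (α.re = 0 → α.im < 0)}

/-- The set Σ₁ := Σ + 1. -/
def Sigma1 : Set ℂ := {α : ℂ | α - 1 ∈ SigmaSet}

/-- The constant `2πi`. -/
def twoPiI : ℂ := 2 * Real.pi * Complex.I

/-- The exponential `exp(2πi·f)` of an endomorphism `f`. -/
def expEnd {E : Type*} [NormedAddCommGroup E] [NormedSpace ℂ E] (f : E →L[ℂ] E) :
    E →L[ℂ] E :=
  NormedSpace.exp (twoPiI • f)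

/-- The power series `ψ(A) := ∑_{k=1}^∞ ((2πi)^k / k!) A^(k-1)`. It satisfies
`A·ψ(A) = ψ(A)·A = exp(2πi·A) − Id`. -/
def psiEnd {E : Type*} [NormedAddCommGroup E] [NormedSpace ℂ E] (A : E →L[ℂ] E) :
    E →L[ℂ] E :=
  ∑' k : ℕ, ((twoPiI ^ (k + 1) / (Nat.factorial (k + 1) : ℂ)) • A ^ k)

/-! ### Auxiliary lemmas -/

/-- The scalar version of the `ψ` series. -/
def psiC (α : ℂ) : ℂ := ∑' k : ℕ, twoPiI ^ (k + 1) / (Nat.factorial (k + 1) : ℂ) * α ^ k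

lemma twoPiI_ne_zero : twoPiI ≠ 0 := by
  simp [twoPiI, Complex.I_ne_zero, Real.pi_ne_zero, Complex.ofReal_ne_zero]

lemma psiC_summable (α : ℂ) :
    Summable (fun k : ℕ => twoPiI ^ (k + 1) / (Nat.factorial (k + 1) : ℂ) * α ^ k) := by
  apply Summable.of_norm_bounded
    ((Real.summable_pow_div_factorial (‖twoPiI‖ * ‖α‖)).mul_left ‖twoPiI‖)
  intro k
  have h1 : ‖twoPiI ^ (k + 1) / (Nat.factorial (k + 1) : ℂ) * α ^ k‖
      = ‖twoPiI‖ ^ (k + 1) / (Nat.factorial (k + 1) : ℝ) * ‖α‖ ^ k := by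
    simp [norm_div, norm_pow, Complex.norm_natCast]
  rw [h1]
  have h2 : (Nat.factorial k : ℝ) ≤ (Nat.factorial (k+1) : ℝ) := by
    exact_mod_cast Nat.factorial_le (Nat.le_succ k)
  have hfk : (0:ℝ) < (Nat.factorial k : ℝ) := by positivity
  calc ‖twoPiI‖ ^ (k + 1) / (Nat.factorial (k + 1) : ℝ) * ‖α‖ ^ k
      ≤ ‖twoPiI‖ ^ (k + 1) / (Nat.factorial k : ℝ) * ‖α‖ ^ k := by gcongr
    _ = ‖twoPiI‖ * ((‖twoPiI‖ * ‖α‖) ^ k / (Nat.factorial k : ℝ)) := by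
        rw [mul_pow, pow_succ']; ring

lemma mul_psiC (α : ℂ) : α * psiC α = Complex.exp (twoPiI * α) - 1 := by
  have hsum : Summable (fun n : ℕ => (twoPiI * α) ^ n / (Nat.factorial n : ℂ)) :=
    NormedSpace.expSeries_div_summable (twoPiI * α)
  have hexp : Complex.exp (twoPiI * α)
      = ∑' n : ℕ, (twoPiI * α) ^ n / (Nat.factorial n : ℂ) := by
    rw [Complex.exp_eq_exp_ℂ, NormedSpace.exp_eq_tsum_div]
  rw [hexp, Summable.tsum_eq_zero_add hsum]
  simp only [pow_zero, Nat.factorial_zero, Nat.cast_one, div_one]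
  rw [add_sub_cancel_left, psiC, ← Summable.tsum_mul_left α (psiC_summable α)]
  congr 1; funext k
  rw [mul_pow]
  field_simp
  ring

lemma psiC_zero : psiC 0 = twoPiI := by
  rw [psiC, tsum_eq_single 0 (fun k hk => by simp [zero_pow hk])]
  simp [twoPiI]

lemma psiC_ne_zero {α : ℂ} (hα : α ∈ Sigma1) : psiC α ≠ 0 := by
  rcases eq_or_ne α 0 with rfl | hne
  · rw [psiC_zero]; exact twoPiI_ne_zero
  · intro h0
    have h1 : Complex.exp (twoPiI * α) = 1 := by
      have := mul_psiC α
      rw [h0, mul_zero] at this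
      linear_combination -this
    obtain ⟨n, hn⟩ := Complex.exp_eq_one_iff.mp h1
    have hα' : α = (n : ℂ) := by
      have h2 : twoPiI * α = twoPiI * (n : ℂ) := by
        rw [hn, twoPiI]; ring
      exact mul_left_cancel₀ twoPiI_ne_zero h2
    subst hα'
    obtain ⟨ha, hb, hc, hd⟩ := hα
    simp only [Complex.sub_re, Complex.intCast_re, Complex.one_re, Complex.sub_im,
      Complex.intCast_im, Complex.one_im, sub_zero] at ha hb hc hd
    have hn0 : n ≠ 0 := fun h => hne (by rw [h]; simp)
    have h0le : (0:ℤ) ≤ n := by exact_mod_cast (by linarith : (0:ℝ) ≤ (n:ℝ))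
    have hle1 : n ≤ 1 := by exact_mod_cast (by linarith : (n:ℝ) ≤ 1)
    have hn1 : n = 1 := by omega
    subst hn1
    exact absurd (hd (by norm_num)) (by norm_num)

section OperatorLemmas

variable {E : Type*} [NormedAddCommGroup E] [NormedSpace ℂ E] [CompleteSpace E]

omit [CompleteSpace E] in
lemma norm_pow_le_CLM (A : E →L[ℂ] E) (k : ℕ) : ‖A ^ k‖ ≤ ‖A‖ ^ k := by
  induction k with
  | zero => simp only [pow_zero]; exact ContinuousLinearMap.norm_id_le
  | succ n ih =>
    rw [pow_succ, pow_succ]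
    calc ‖A ^ n * A‖ ≤ ‖A ^ n‖ * ‖A‖ := norm_mul_le _ _
      _ ≤ ‖A‖ ^ n * ‖A‖ := by gcongr

lemma psi_summable (A : E →L[ℂ] E) :
    Summable (fun k : ℕ => (twoPiI ^ (k + 1) / (Nat.factorial (k + 1) : ℂ)) • A ^ k) := by
  apply Summable.of_norm_bounded
    ((Real.summable_pow_div_factorial (‖twoPiI‖ * ‖A‖)).mul_left ‖twoPiI‖)
  intro k
  refine (norm_smul_le (twoPiI ^ (k + 1) / (Nat.factorial (k + 1) : ℂ)) (A ^ k)).trans ?_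
  have h1 : ‖twoPiI ^ (k + 1) / (Nat.factorial (k + 1) : ℂ)‖
      = ‖twoPiI‖ ^ (k + 1) / (Nat.factorial (k + 1) : ℝ) := by
    simp [norm_div, norm_pow, Complex.norm_natCast]
  rw [h1]
  have h2 : (Nat.factorial k : ℝ) ≤ (Nat.factorial (k+1) : ℝ) := by
    exact_mod_cast Nat.factorial_le (Nat.le_succ k)
  have hfk : (0:ℝ) < (Nat.factorial k : ℝ) := by positivity
  calc ‖twoPiI‖ ^ (k + 1) / (Nat.factorial (k + 1) : ℝ) * ‖A ^ k‖
      ≤ ‖twoPiI‖ ^ (k + 1) / (Nat.factorial k : ℝ) * ‖A‖ ^ k := by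
        gcongr
        exact norm_pow_le_CLM A k
    _ = ‖twoPiI‖ * ((‖twoPiI‖ * ‖A‖) ^ k / (Nat.factorial k : ℝ)) := by
        rw [mul_pow, pow_succ']; ring

lemma psiEnd_mul (A : E →L[ℂ] E) : psiEnd A * A = expEnd A - 1 := by
  have hsum : Summable (fun n : ℕ => ((Nat.factorial n : ℂ)⁻¹) • (twoPiI • A) ^ n) :=
    NormedSpace.expSeries_summable' (twoPiI • A)
  have hexp : expEnd A = ∑' n : ℕ, ((Nat.factorial n : ℂ)⁻¹) • (twoPiI • A) ^ n := by
    rw [expEnd, NormedSpace.exp_eq_tsum ℂ]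
  rw [hexp, Summable.tsum_eq_zero_add hsum]
  simp only [pow_zero, Nat.factorial_zero, Nat.cast_one, inv_one, one_smul]
  rw [add_sub_cancel_left, psiEnd, ← Summable.tsum_mul_right A (psi_summable A)]
  congr 1; funext k
  rw [smul_mul_assoc, ← pow_succ, smul_pow, smul_smul]
  congr 1
  rw [div_eq_mul_inv, mul_comm]

lemma mul_psiEnd (A : E →L[ℂ] E) : A * psiEnd A = psiEnd A * A := by
  rw [psiEnd, ← Summable.tsum_mul_right A (psi_summable A),
    ← Summable.tsum_mul_left A (psi_summable A)]
  congr 1; funext k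
  rw [smul_mul_assoc, mul_smul_comm, ← pow_succ, ← pow_succ']

omit [CompleteSpace E] in
lemma pow_apply_eigen {A : E →L[ℂ] E} {α : ℂ} {v : E} (hv : A v = α • v) (k : ℕ) :
    (A ^ k) v = α ^ k • v := by
  induction k with
  | zero => simp
  | succ n ih =>
    rw [pow_succ, ContinuousLinearMap.mul_apply, hv, map_smul, ih, smul_smul, ← pow_succ']

lemma psiEnd_apply_eigen {A : E →L[ℂ] E} {α : ℂ} {v : E} (hv : A v = α • v) :
    psiEnd A v = psiC α • v := by
  have h1 := (ContinuousLinearMap.apply ℂ E v).map_tsum (psi_summable A)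
  simp only [ContinuousLinearMap.apply_apply] at h1
  rw [psiEnd, h1]
  have h2 : ∀ k : ℕ, ((twoPiI ^ (k + 1) / (Nat.factorial (k + 1) : ℂ)) • A ^ k) v
      = (twoPiI ^ (k + 1) / (Nat.factorial (k + 1) : ℂ) * α ^ k) • v := by
    intro k
    rw [ContinuousLinearMap.smul_apply, pow_apply_eigen hv, smul_smul]
  simp only [h2]
  rw [Summable.tsum_smul_const (psiC_summable α), psiC]

omit [CompleteSpace E] in
lemma mem_spectrum_of_eigen {A : E →L[ℂ] E} {α : ℂ} {v : E} (hv0 : v ≠ 0)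
    (hv : A v = α • v) : α ∈ spectrum ℂ A := by
  rw [spectrum.mem_iff]
  intro hU
  have hker : (algebraMap ℂ (E →L[ℂ] E) α - A) v = 0 := by
    simp [ContinuousLinearMap.sub_apply, Algebra.algebraMap_eq_smul_one, hv]
  apply hv0
  calc v = (1 : E →L[ℂ] E) v := rfl
    _ = ((↑hU.unit⁻¹ * ↑hU.unit : E →L[ℂ] E)) v := by rw [hU.unit.inv_mul]
    _ = (↑hU.unit⁻¹ : E →L[ℂ] E) ((algebraMap ℂ (E →L[ℂ] E) α - A) v) := by
        rw [ContinuousLinearMap.mul_apply, hU.unit_spec]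
    _ = 0 := by rw [hker, map_zero]

end OperatorLemmas

/-- Let `w∘u + Id` be invertible and let `s` be the unique endomorphism with spectrum in Σ₁
and `exp(2πi·s) = w∘u + Id`. Then `ψ(s)` is invertible and `x := ψ(s)⁻¹ ∘ w` satisfies
`x∘u = s`; in particular the spectrum of `x∘u` is contained in Σ₁. -/
theorem psi_inv_comp_w_comp_u_eq_s
    {V W : Type*} [NormedAddCommGroup V] [NormedSpace ℂ V] [FiniteDimensional ℂ V]
    [NormedAddCommGroup W] [NormedSpace ℂ W] [FiniteDimensional ℂ W]
    (u : V →L[ℂ] W) (w : W →L[ℂ] V)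
    (hinv : IsUnit (w.comp u + ContinuousLinearMap.id ℂ V))
    (s : V →L[ℂ] V) (hs : spectrum ℂ s ⊆ Sigma1)
    (hes : expEnd s = w.comp u + ContinuousLinearMap.id ℂ V) :
    IsUnit (psiEnd s) ∧
    ((Ring.inverse (psiEnd s)).comp w).comp u = s ∧
    spectrum ℂ (((Ring.inverse (psiEnd s)).comp w).comp u) ⊆ Sigma1 := by
  have hcomm := mul_psiEnd s
  -- the kernel of ψ(s) is trivial
  have hker : LinearMap.ker ((psiEnd s : V →ₗ[ℂ] V)) = ⊥ := by
    by_contra hK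
    haveI : Nontrivial (LinearMap.ker ((psiEnd s : V →ₗ[ℂ] V))) :=
      Submodule.nontrivial_iff_ne_bot.mpr hK
    set K := LinearMap.ker ((psiEnd s : V →ₗ[ℂ] V)) with hKdef
    have hstab : ∀ x ∈ K, (s : V →ₗ[ℂ] V) x ∈ K := by
      intro x hx
      rw [LinearMap.mem_ker] at hx ⊢
      have hx' : psiEnd s x = 0 := hx
      show psiEnd s (s x) = 0
      have : psiEnd s (s x) = (psiEnd s * s) x := rfl
      rw [this, ← hcomm]
      show s (psiEnd s x) = 0
      rw [hx', map_zero]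
    set f : Module.End ℂ K := (s : V →ₗ[ℂ] V).restrict hstab with hfdef
    obtain ⟨α, hα⟩ := Module.End.exists_eigenvalue f
    obtain ⟨v, hv⟩ := hα.exists_hasEigenvector
    have hv0 : (v : V) ≠ 0 := fun h => hv.2 (Subtype.coe_injective (by simpa using h))
    have hsv : s (v : V) = α • (v : V) := by
      have := congrArg (Subtype.val) hv.apply_eq_smul
      simpa [hfdef, LinearMap.restrict_coe_apply] using this
    have hαspec : α ∈ spectrum ℂ s := mem_spectrum_of_eigen hv0 hsv
    have hψv : psiEnd s (v : V) = 0 := v.2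
    rw [psiEnd_apply_eigen hsv] at hψv
    rcases smul_eq_zero.mp hψv with h | h
    · exact psiC_ne_zero (hs hαspec) h
    · exact hv0 h
  -- hence ψ(s) is a unit
  have hUnit : IsUnit (psiEnd s) := by
    have hinj : Function.Injective (psiEnd s : V →ₗ[ℂ] V) := LinearMap.ker_eq_bot.mp hker
    have hbij : Function.Bijective (psiEnd s : V →ₗ[ℂ] V) :=
      ⟨hinj, (LinearMap.injective_iff_surjective).mp hinj⟩
    let e : V ≃ₗ[ℂ] V := LinearEquiv.ofBijective _ hbij
    exact ⟨e.toContinuousLinearEquiv.toUnit, by ext x; rfl⟩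
  -- ψ(s)·s = w∘u
  have hkey : psiEnd s * s = w.comp u := by
    rw [psiEnd_mul, hes, ContinuousLinearMap.one_def, add_sub_cancel_right]
  have h2 : ((Ring.inverse (psiEnd s)).comp w).comp u = s := by
    rw [ContinuousLinearMap.comp_assoc, ← ContinuousLinearMap.mul_def, ← hkey, ← mul_assoc,
      Ring.inverse_mul_cancel _ hUnit, one_mul]
  exact ⟨hUnit, h2, by rw [h2]; exact hs⟩
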